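/- Let S be a Hausdorff topological semigroup such that the power S^{S^ℕ} (with product topology) is countably compact. Then S is p-compact for some free ultrafilter p on ℕ. -/
import Mathlib


/-- An ultrafilter on `ℕ` is free if it contains the cofinite filter. -/
def FreeUltrafilter (p : Ultrafilter ℕ) : Prop := (↑p : Filter ℕ) ≤ Filter.cofinite

/-- If `S` is a Hausdorff topological semigroup whose power `S^(S^ℕ)` (with
the product topology) is countably compact (every sequence has an
accumulation point), then `S` is `p`-compact for some free ultrafilter `p`
on `ℕ`. -/
theorem pCompact_of_countablyCompact_bigPower {S : Type*} [Semigroup S]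
    [TopologicalSpace S] [T2Space S] [ContinuousMul S]
    (hcc : ∀ u : ℕ → ((ℕ → S) → S), ∃ a : (ℕ → S) → S,
      MapClusterPt a Filter.atTop u) :
    ∃ p : Ultrafilter ℕ, FreeUltrafilter p ∧
      ∀ u : ℕ → S, ∃ a : S, Filter.Tendsto u ↑p (nhds a) := by
  obtain ⟨a, ha⟩ := hcc (fun n f => f n)
  rw [mapClusterPt_iff_ultrafilter] at ha
  obtain ⟨p, hp, hten⟩ := ha
  refine ⟨p, ?_, fun u => ⟨a u, ?_⟩⟩
  · simpa [FreeUltrafilter, Nat.cofinite_eq_atTop] using hp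
  · have := (tendsto_pi_nhds.mp hten) u
    simpa using this
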